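/- Fix Δx > 0, Δt = Δx/8, and T > 0, and set M = ⌊T/Δt⌋. Let (U_{o,j})_{j∈ℤ} ⊆ [0,1] with Σ_{j∈ℤ} |U_{o,j}| < ∞, let (U^n_{o,j})_{j∈ℤ} ⊆ [0,1] be a sequence of initial grid data with Σ_{j∈ℤ} |U^n_{o,j} − U_{o,j}| → 0 as n → ∞, and let H_n > 0 with H_n → 0. For each n let ((U^n)^m_j) be the iterates of the nonlocal Eulerian–Lagrangian scheme with kernel η_{H_n} and initial data (U^n_{o,j}), and let (U^m_j) be the iterates of the local Eulerian–Lagrangian scheme with initial data (U_{o,j}). Then max_{0 ≤ m ≤ M} Δx · Σ_{j∈ℤ} |(U^n)^m_j − U^m_j| → 0 as n → ∞. -/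

import Mathlib

open Filter

/-- One step of the Eulerian–Lagrangian scheme: given cell values `U` and
speeds `V`, with `h_j = Δx + Δt (V_{j+1} - V_j)` and
`F_j = (U_j + U_{j-1})(V_j + V_{j-1}) / h_{j-1}`, the update is
`U'_j = (U_{j-1} + 2U_j + U_{j+1})/4 + (Δt/4)(F_j - F_{j+1})`. -/
noncomputable def elStep (dx dt : ℝ) (U V : ℤ → ℝ) (j : ℤ) : ℝ :=
  (U (j - 1) + 2 * U j + U (j + 1)) / 4
    + (dt / 4) *
      ((U j + U (j - 1)) * (V j + V (j - 1)) / (dx + dt * (V j - V (j - 1)))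
        - (U (j + 1) + U j) * (V (j + 1) + V j) / (dx + dt * (V (j + 1) - V j)))

/-- The normalized discrete convolution with `η_H(x) = η(x/H)/H`, `N_H = ⌈H/Δx⌉`. -/
noncomputable def discConv (dx H : ℝ) (η : ℝ → ℝ) (f : ℤ → ℝ) (j : ℤ) : ℝ :=
  (∑ i ∈ Finset.range ⌈H / dx⌉₊, f (j + (i : ℤ)) * (η ((-(i : ℝ) * dx) / H) / H))
    / (∑ i ∈ Finset.range ⌈H / dx⌉₊, η ((-(i : ℝ) * dx) / H) / H)

/-- Iterates of the local Eulerian–Lagrangian scheme with speed `v(r) = 1 - r`. -/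
noncomputable def locIter (dx dt : ℝ) (U0 : ℤ → ℝ) : ℕ → ℤ → ℝ
  | 0 => U0
  | m + 1 => elStep dx dt (locIter dx dt U0 m) (fun j => 1 - locIter dx dt U0 m j)

/-- Iterates of the nonlocal Eulerian–Lagrangian scheme with speed
`v(r) = 1 - r` evaluated at the discrete convolution with kernel `η_H`. -/
noncomputable def nlocIter (dx dt H : ℝ) (η : ℝ → ℝ) (U0 : ℤ → ℝ) : ℕ → ℤ → ℝ
  | 0 => U0
  | m + 1 => elStep dx dt (nlocIter dx dt H η U0 m)
      (fun j => 1 - discConv dx H η (nlocIter dx dt H η U0 m) j)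

/-- Hypotheses on the kernel `η`: `C²` and non-decreasing on `[-1,0]`, vanishing
at `-1`, unit integral on `[-1,0]`, zero outside `[-1,0]`. -/
def KernelOK (η : ℝ → ℝ) : Prop :=
  ContDiffOn ℝ 2 η (Set.Icc (-1 : ℝ) 0) ∧ MonotoneOn η (Set.Icc (-1 : ℝ) 0) ∧
    η (-1) = 0 ∧ (∫ x in (-1 : ℝ)..0, η x) = 1 ∧ ∀ x, x ∉ Set.Icc (-1 : ℝ) 0 → η x = 0

/- ### Auxiliary lemmas -/

/-- The dimensionless flux function. -/
noncomputable def gfun (a b : ℝ) : ℝ := (a+b)*(2-a-b)/(8+a-b)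

/-- The dimensionless one-step update function of the scheme with `Δt = Δx/8`. -/
noncomputable def Sfun (a b c : ℝ) : ℝ := (a+2*b+c)/4 + (gfun a b - gfun b c)/4

lemma elStep_eq {dx : ℝ} (hdx : 0 < dx) (U : ℤ → ℝ) (j : ℤ)
    (ha : U (j-1) ∈ Set.Icc (0:ℝ) 1) (hb : U j ∈ Set.Icc (0:ℝ) 1)
    (hc : U (j+1) ∈ Set.Icc (0:ℝ) 1) :
    elStep dx (dx/8) U (fun k => 1 - U k) j = Sfun (U (j-1)) (U j) (U (j+1)) := by
  obtain ⟨ha0, ha1⟩ := ha; obtain ⟨hb0, hb1⟩ := hb; obtain ⟨hc0, hc1⟩ := hc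
  set a := U (j-1) with hA
  set b := U j with hB
  set c := U (j+1) with hC
  have hP : (8:ℝ) + a - b ≠ 0 := by intro h; linarith
  have hQ : (8:ℝ) + b - c ≠ 0 := by intro h; linarith
  simp only [elStep, Sfun, gfun]
  rw [show dx + dx/8 * ((1 - b) - (1 - a)) = dx*(8+a-b)/8 by ring,
      show dx + dx/8 * ((1 - c) - (1 - b)) = dx*(8+b-c)/8 by ring]
  field_simp
  ring

lemma Sfun_mem {a b c : ℝ} (ha : a ∈ Set.Icc (0:ℝ) 1) (hb : b ∈ Set.Icc (0:ℝ) 1)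
    (hc : c ∈ Set.Icc (0:ℝ) 1) : Sfun a b c ∈ Set.Icc (0:ℝ) 1 := by
  obtain ⟨ha0, ha1⟩ := ha; obtain ⟨hb0, hb1⟩ := hb; obtain ⟨hc0, hc1⟩ := hc
  have hP : (0:ℝ) < 8 + a - b := by linarith
  have hQ : (0:ℝ) < 8 + b - c := by linarith
  have key : Sfun a b c =
      ((a+2*b+c)*((8+a-b)*(8+b-c)) + (a+b)*(2-a-b)*(8+b-c) - (b+c)*(2-b-c)*(8+a-b))
        / (4*((8+a-b)*(8+b-c))) := by
    unfold Sfun gfun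
    field_simp
    ring
  constructor
  · rw [key]
    apply div_nonneg _ (by positivity)
    nlinarith [mul_nonneg ha0 hb0, mul_nonneg hb0 hc0, mul_nonneg ha0 hc0,
      mul_nonneg (mul_nonneg ha0 hb0) hc0, sq_nonneg (a-b), sq_nonneg (b-c), sq_nonneg (a-c),
      mul_nonneg ha0 (sub_nonneg.2 hb1), mul_nonneg hb0 (sub_nonneg.2 hc1),
      mul_nonneg hc0 (sub_nonneg.2 ha1), mul_nonneg ha0 (sub_nonneg.2 ha1),
      mul_nonneg hb0 (sub_nonneg.2 hb1), mul_nonneg hc0 (sub_nonneg.2 hc1)]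
  · rw [key, div_le_one (by positivity)]
    nlinarith [mul_nonneg ha0 hb0, mul_nonneg hb0 hc0, mul_nonneg ha0 hc0,
      mul_nonneg (mul_nonneg ha0 hb0) hc0, sq_nonneg (a-b), sq_nonneg (b-c), sq_nonneg (a-c),
      mul_nonneg (sub_nonneg.2 ha1) (sub_nonneg.2 hb1),
      mul_nonneg (sub_nonneg.2 hb1) (sub_nonneg.2 hc1),
      mul_nonneg (sub_nonneg.2 ha1) (sub_nonneg.2 hc1),
      mul_nonneg ha0 (sub_nonneg.2 hb1), mul_nonneg hb0 (sub_nonneg.2 hc1),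
      mul_nonneg hc0 (sub_nonneg.2 ha1), mul_nonneg ha0 (sub_nonneg.2 ha1),
      mul_nonneg hb0 (sub_nonneg.2 hb1), mul_nonneg hc0 (sub_nonneg.2 hc1)]

lemma gfun_lip {a b a' b' : ℝ} (ha0 : 0 ≤ a) (ha1 : a ≤ 1) (hb0 : 0 ≤ b) (hb1 : b ≤ 1)
    (ha0' : 0 ≤ a') (ha1' : a' ≤ 1) (hb0' : 0 ≤ b') (hb1' : b' ≤ 1) :
    |gfun a b - gfun a' b'| ≤ |a - a'| + |b - b'| := by
  have hP : (0:ℝ) < 8 + a - b := by linarith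
  have hP' : (0:ℝ) < 8 + a' - b' := by linarith
  have heq : gfun a b - gfun a' b' =
      (((a+b)*(2-a-b) - (a'+b')*(2-a'-b'))*(8+a'-b')
        + (a'+b')*(2-a'-b')*((a'-b') - (a-b))) / ((8+a-b)*(8+a'-b')) := by
    unfold gfun
    field_simp
    ring
  rw [heq, abs_div, abs_of_pos (by positivity : (0:ℝ) < (8+a-b)*(8+a'-b'))]
  have hAA : |(a+b)*(2-a-b) - (a'+b')*(2-a'-b')| ≤ 2*(|a-a'| + |b-b'|) := by
    have e : (a+b)*(2-a-b) - (a'+b')*(2-a'-b')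
        = ((a-a')+(b-b'))*(2-a-b-a'-b') := by ring
    rw [e, abs_mul]
    have h1 : |(a-a')+(b-b')| ≤ |a-a'| + |b-b'| := abs_add_le _ _
    have h2 : |2-a-b-a'-b'| ≤ 2 := by
      rw [abs_le]; constructor <;> linarith
    calc |(a-a')+(b-b')| * |2-a-b-a'-b'| ≤ (|a-a'| + |b-b'|) * 2 :=
          mul_le_mul h1 h2 (abs_nonneg _) (by positivity)
      _ = 2*(|a-a'| + |b-b'|) := by ring
  have hA' : |(a'+b')*(2-a'-b')| ≤ 1 := by
    rw [abs_le]; constructor <;> nlinarith [sq_nonneg (a'+b'-1)]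
  have hsub : |(a'-b') - (a-b)| ≤ |a-a'| + |b-b'| := by
    have e : (a'-b') - (a-b) = -(a-a') + (b-b') := by ring
    rw [e]
    calc |(-(a-a')) + (b-b')| ≤ |(-(a-a'))| + |b-b'| := abs_add_le _ _
      _ = |a-a'| + |b-b'| := by rw [abs_neg]
  have hnum : |((a+b)*(2-a-b) - (a'+b')*(2-a'-b'))*(8+a'-b')
        + (a'+b')*(2-a'-b')*((a'-b') - (a-b))| ≤ 19*(|a-a'| + |b-b'|) := by
    calc |_ + _| ≤ |((a+b)*(2-a-b) - (a'+b')*(2-a'-b'))*(8+a'-b')|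
            + |(a'+b')*(2-a'-b')*((a'-b') - (a-b))| := abs_add_le _ _
      _ = |(a+b)*(2-a-b) - (a'+b')*(2-a'-b')| * |8+a'-b'|
            + |(a'+b')*(2-a'-b')| * |(a'-b') - (a-b)| := by rw [abs_mul, abs_mul]
      _ ≤ (2*(|a-a'| + |b-b'|)) * 9 + 1 * (|a-a'| + |b-b'|) := by
          apply add_le_add
          · exact mul_le_mul hAA (by rw [abs_le]; constructor <;> linarith)
              (abs_nonneg _) (by positivity)
          · exact mul_le_mul hA' hsub (abs_nonneg _) zero_le_one
      _ = 19*(|a-a'| + |b-b'|) := by ring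
  have hden : (49:ℝ) ≤ (8+a-b)*(8+a'-b') := by nlinarith
  calc _ ≤ (19*(|a-a'| + |b-b'|)) / 49 := by
        apply div_le_div₀ (by positivity) hnum (by norm_num) hden
    _ ≤ |a-a'| + |b-b'| := by
        have := abs_nonneg (a-a'); have := abs_nonneg (b-b'); linarith

lemma Sfun_lip {a b c a' b' c' : ℝ} (ha0 : 0 ≤ a) (ha1 : a ≤ 1) (hb0 : 0 ≤ b) (hb1 : b ≤ 1)
    (hc0 : 0 ≤ c) (hc1 : c ≤ 1)
    (ha0' : 0 ≤ a') (ha1' : a' ≤ 1) (hb0' : 0 ≤ b') (hb1' : b' ≤ 1)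
    (hc0' : 0 ≤ c') (hc1' : c' ≤ 1) :
    |Sfun a b c - Sfun a' b' c'| ≤ 3*(|a - a'| + |b - b'| + |c - c'|) := by
  have h1 := gfun_lip ha0 ha1 hb0 hb1 ha0' ha1' hb0' hb1'
  have h2 := gfun_lip hb0 hb1 hc0 hc1 hb0' hb1' hc0' hc1'
  have e : Sfun a b c - Sfun a' b' c'
      = ((a-a') + 2*(b-b') + (c-c'))/4 + (gfun a b - gfun a' b')/4
        - (gfun b c - gfun b' c')/4 := by unfold Sfun; ring
  obtain ⟨h1l, h1r⟩ := abs_le.mp h1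
  obtain ⟨h2l, h2r⟩ := abs_le.mp h2
  have la1 := le_abs_self (a-a'); have la2 := neg_abs_le (a-a')
  have lb1 := le_abs_self (b-b'); have lb2 := neg_abs_le (b-b')
  have lc1 := le_abs_self (c-c'); have lc2 := neg_abs_le (c-c')
  rw [abs_le]; constructor <;> rw [e] <;> linarith

lemma locIter_mem {dx : ℝ} (hdx : 0 < dx) {U : ℤ → ℝ}
    (hU : ∀ j, U j ∈ Set.Icc (0:ℝ) 1) :
    ∀ m j, locIter dx (dx/8) U m j ∈ Set.Icc (0:ℝ) 1 := by
  intro m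
  induction m with
  | zero => exact hU
  | succ m ih =>
    intro j
    have e : locIter dx (dx/8) U (m+1) j
        = elStep dx (dx/8) (locIter dx (dx/8) U m)
            (fun k => 1 - locIter dx (dx/8) U m k) j := rfl
    rw [e, elStep_eq hdx _ j (ih _) (ih _) (ih _)]
    exact Sfun_mem (ih _) (ih _) (ih _)

set_option maxHeartbeats 1000000 in
lemma iter_l1 {dx : ℝ} (hdx : 0 < dx) {U W : ℤ → ℝ}
    (hU : ∀ j, U j ∈ Set.Icc (0:ℝ) 1) (hW : ∀ j, W j ∈ Set.Icc (0:ℝ) 1)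
    (hsum : Summable fun j => |U j - W j|) :
    ∀ m, Summable (fun j => |locIter dx (dx/8) U m j - locIter dx (dx/8) W m j|) ∧
      (∑' j : ℤ, |locIter dx (dx/8) U m j - locIter dx (dx/8) W m j|)
        ≤ 9^m * ∑' j : ℤ, |U j - W j| := by
  intro m
  induction m with
  | zero =>
    refine ⟨hsum, ?_⟩
    simp [locIter]
  | succ m ih =>
    have hU' := locIter_mem hdx hU m
    have hW' := locIter_mem hdx hW m
    obtain ⟨ihs, iht⟩ := ih
    set f : ℤ → ℝ := fun j => |locIter dx (dx/8) U m j - locIter dx (dx/8) W m j| with hf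
    have hs1 : Summable (fun j => f (j-1)) := (Equiv.subRight (1:ℤ)).summable_iff.mpr ihs
    have hs2 : Summable (fun j => f (j+1)) := (Equiv.addRight (1:ℤ)).summable_iff.mpr ihs
    have hg : Summable (fun j => 3*(f (j-1) + f j + f (j+1))) :=
      ((hs1.add ihs).add hs2).mul_left 3
    have hb : ∀ j, |locIter dx (dx/8) U (m+1) j - locIter dx (dx/8) W (m+1) j|
        ≤ 3*(f (j-1) + f j + f (j+1)) := by
      intro j
      have e1 : locIter dx (dx/8) U (m+1) j
          = elStep dx (dx/8) (locIter dx (dx/8) U m)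
              (fun k => 1 - locIter dx (dx/8) U m k) j := rfl
      have e2 : locIter dx (dx/8) W (m+1) j
          = elStep dx (dx/8) (locIter dx (dx/8) W m)
              (fun k => 1 - locIter dx (dx/8) W m k) j := rfl
      rw [e1, e2, elStep_eq hdx _ j (hU' _) (hU' _) (hU' _),
        elStep_eq hdx _ j (hW' _) (hW' _) (hW' _)]
      exact Sfun_lip (hU' (j-1)).1 (hU' (j-1)).2 (hU' j).1 (hU' j).2
        (hU' (j+1)).1 (hU' (j+1)).2 (hW' (j-1)).1 (hW' (j-1)).2
        (hW' j).1 (hW' j).2 (hW' (j+1)).1 (hW' (j+1)).2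
    have hsum' : Summable (fun j => |locIter dx (dx/8) U (m+1) j - locIter dx (dx/8) W (m+1) j|) :=
      Summable.of_nonneg_of_le (fun j => abs_nonneg _) hb hg
    refine ⟨hsum', ?_⟩
    calc (∑' j : ℤ, |locIter dx (dx/8) U (m+1) j - locIter dx (dx/8) W (m+1) j|)
        ≤ ∑' j : ℤ, 3*(f (j-1) + f j + f (j+1)) := Summable.tsum_le_tsum hb hsum' hg
      _ = 3*((∑' j : ℤ, f (j-1)) + (∑' j : ℤ, f j) + (∑' j : ℤ, f (j+1))) := by
          rw [tsum_mul_left, Summable.tsum_add (hs1.add ihs) hs2, Summable.tsum_add hs1 ihs]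
      _ = 9 * ∑' j : ℤ, f j := by
          have ts1 : (∑' j : ℤ, f (j - 1)) = ∑' j : ℤ, f j := (Equiv.subRight (1:ℤ)).tsum_eq f
          have ts2 : (∑' j : ℤ, f (j + 1)) = ∑' j : ℤ, f j := (Equiv.addRight (1:ℤ)).tsum_eq f
          rw [ts1, ts2]; ring
      _ ≤ 9^(m+1) * ∑' j : ℤ, |U j - W j| := by
          rw [pow_succ]
          linarith [iht]

lemma eta0_pos {η : ℝ → ℝ} (hη : KernelOK η) : 0 < η 0 := by
  obtain ⟨-, hmono, hm1, hint, -⟩ := hη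
  have hmem1 : (-1:ℝ) ∈ Set.Icc (-1:ℝ) 0 := ⟨le_rfl, by norm_num⟩
  have hmem0 : (0:ℝ) ∈ Set.Icc (-1:ℝ) 0 := ⟨by norm_num, le_rfl⟩
  by_contra h
  push_neg at h
  have hzero : ∀ x ∈ Set.Icc (-1:ℝ) 0, η x = 0 := fun x hx =>
    le_antisymm ((hmono hx hmem0 hx.2).trans h) (hm1 ▸ hmono hmem1 hx hx.1)
  have : (∫ x in (-1:ℝ)..0, η x) = 0 := by
    rw [intervalIntegral.integral_congr (g := fun _ => (0:ℝ))]
    · simp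
    · intro x hx
      rw [Set.uIcc_of_le (by norm_num : (-1:ℝ) ≤ 0)] at hx
      exact hzero x hx
  linarith [hint.symm.trans this]

lemma discConv_eq {dx H : ℝ} {η : ℝ → ℝ} (hdx : 0 < dx) (hH : 0 < H) (hHdx : H ≤ dx)
    (hη0 : 0 < η 0) (f : ℤ → ℝ) (j : ℤ) : discConv dx H η f j = f j := by
  have hceil : ⌈H / dx⌉₊ = 1 := by
    refine le_antisymm (Nat.ceil_le.mpr ?_) (Nat.one_le_ceil_iff.mpr (div_pos hH hdx))
    push_cast
    exact (div_le_one hdx).mpr hHdx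
  unfold discConv
  rw [hceil]
  simp only [Finset.sum_range_one, Nat.cast_zero, neg_zero, zero_mul, zero_div, add_zero]
  exact mul_div_cancel_right₀ _ (ne_of_gt (div_pos hη0 hH))

lemma nloc_eq {dx H : ℝ} {η : ℝ → ℝ} (hdx : 0 < dx) (hH : 0 < H) (hHdx : H ≤ dx)
    (hη0 : 0 < η 0) (U0 : ℤ → ℝ) :
    ∀ m, nlocIter dx (dx/8) H η U0 m = locIter dx (dx/8) U0 m := by
  intro m
  induction m with
  | zero => rfl
  | succ m ih =>
    show elStep dx (dx/8) (nlocIter dx (dx/8) H η U0 m)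
        (fun j => 1 - discConv dx H η (nlocIter dx (dx/8) H η U0 m) j)
      = elStep dx (dx/8) (locIter dx (dx/8) U0 m)
        (fun j => 1 - locIter dx (dx/8) U0 m j)
    rw [ih]
    have hv : (fun j => 1 - discConv dx H η (locIter dx (dx/8) U0 m) j)
        = fun j => 1 - locIter dx (dx/8) U0 m j := by
      funext k
      rw [discConv_eq hdx hH hHdx hη0]
    rw [hv]

/-- Discrete nonlocal-to-local limit for the
Eulerian–Lagrangian scheme: if the initial grid data `Uⁿ_o → U_o` in `ℓ¹` and
`H_n → 0`, then `max_{0 ≤ m ≤ M} Δx Σ_j |(Uⁿ)^m_j - U^m_j| → 0`, where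
`M = ⌊T/Δt⌋` and `Δt = Δx/8`. -/
theorem stmt11 (dx T : ℝ) (hdx : 0 < dx) (hT : 0 < T)
    (Uo : ℤ → ℝ) (hUo : ∀ j, Uo j ∈ Set.Icc (0 : ℝ) 1)
    (hUosum : Summable fun j => |Uo j|)
    (Un : ℕ → ℤ → ℝ) (hUn : ∀ n j, Un n j ∈ Set.Icc (0 : ℝ) 1)
    (hUnsum : ∀ n, Summable fun j => |Un n j - Uo j|)
    (hconv : Tendsto (fun n => ∑' j : ℤ, |Un n j - Uo j|) atTop (nhds 0))
    (Hn : ℕ → ℝ) (hHn : ∀ n, 0 < Hn n) (hHn0 : Tendsto Hn atTop (nhds 0))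
    (η : ℝ → ℝ) (hη : KernelOK η) :
    Tendsto (fun n =>
        (Finset.range (⌊T / (dx / 8)⌋₊ + 1)).sup' Finset.nonempty_range_add_one
          (fun m => dx * ∑' j : ℤ,
            |nlocIter dx (dx / 8) (Hn n) η (Un n) m j - locIter dx (dx / 8) Uo m j|))
      atTop (nhds 0) := by
  have hη0 := eta0_pos hη
  set M := ⌊T / (dx / 8)⌋₊ with hM
  have hG : Tendsto (fun n => (Finset.range (M+1)).sup' Finset.nonempty_range_add_one
      (fun m => dx * ∑' j : ℤ,
        |locIter dx (dx/8) (Un n) m j - locIter dx (dx/8) Uo m j|)) atTop (nhds 0) := by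
    have hbound : ∀ n, (Finset.range (M+1)).sup' Finset.nonempty_range_add_one
        (fun m => dx * ∑' j : ℤ,
          |locIter dx (dx/8) (Un n) m j - locIter dx (dx/8) Uo m j|)
        ≤ dx * 9^M * ∑' j : ℤ, |Un n j - Uo j| := by
      intro n
      apply Finset.sup'_le
      intro m hm
      have hm' : m ≤ M := Nat.lt_succ_iff.mp (Finset.mem_range.mp hm)
      have h1 := (iter_l1 hdx (hUn n) hUo (hUnsum n) m).2
      have h2 : (9:ℝ)^m ≤ 9^M := pow_le_pow_right₀ (by norm_num) hm'
      have h0 : (0:ℝ) ≤ ∑' j : ℤ, |Un n j - Uo j| := tsum_nonneg fun _ => abs_nonneg _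
      calc dx * ∑' j : ℤ, |locIter dx (dx/8) (Un n) m j - locIter dx (dx/8) Uo m j|
          ≤ dx * ((9:ℝ)^m * ∑' j : ℤ, |Un n j - Uo j|) :=
            mul_le_mul_of_nonneg_left h1 hdx.le
        _ ≤ dx * 9^M * ∑' j : ℤ, |Un n j - Uo j| := by
            rw [mul_assoc]
            exact mul_le_mul_of_nonneg_left (mul_le_mul_of_nonneg_right h2 h0) hdx.le
    have hnn : ∀ n, (0:ℝ) ≤ (Finset.range (M+1)).sup' Finset.nonempty_range_add_one
        (fun m => dx * ∑' j : ℤ,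
          |locIter dx (dx/8) (Un n) m j - locIter dx (dx/8) Uo m j|) := by
      intro n
      have h00 : (0:ℝ) ≤ dx * ∑' j : ℤ,
          |locIter dx (dx/8) (Un n) 0 j - locIter dx (dx/8) Uo 0 j| :=
        mul_nonneg hdx.le (tsum_nonneg fun _ => abs_nonneg _)
      exact h00.trans (Finset.le_sup'
        (fun m => dx * ∑' j : ℤ,
          |locIter dx (dx/8) (Un n) m j - locIter dx (dx/8) Uo m j|)
        (Finset.mem_range.mpr (Nat.succ_pos M)))
    have hlim : Tendsto (fun n => dx * 9^M * ∑' j : ℤ, |Un n j - Uo j|) atTop (nhds 0) := by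
      have := hconv.const_mul (dx * 9^M)
      simpa using this
    exact squeeze_zero hnn hbound hlim
  refine hG.congr' ?_
  have hev : ∀ᶠ n in atTop, Hn n < dx := hHn0.eventually_lt_const hdx
  filter_upwards [hev] with n hn
  refine Finset.sup'_congr _ rfl ?_
  intro m hm
  rw [nloc_eq hdx (hHn n) hn.le hη0 (Un n) m]
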